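/- There exists a subset S ⊆ W such that d(S, G_1) = d(S, G_2) and d(S, G_1) + d(S, G_2) ≥ (k − 1)/2 if and only if H contains a k-clique. -/

import Mathlib

/-- Number of edges of `G` with both endpoints in `S`. -/
noncomputable def edgeCnt {W : Type*} (G : SimpleGraph W) (S : Finset W) : ℕ :=
  {e ∈ G.edgeSet | ∀ v ∈ e, v ∈ S}.ncard

/-- Density of the subgraph induced by `S` in `G`. -/
noncomputable def dens {W : Type*} (G : SimpleGraph W) (S : Finset W) : ℝ :=
  (edgeCnt G S : ℝ) / (S.card : ℝ)

/-- The first snapshot: a copy of `H` on the `inl` vertices, the `k` new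
vertices being isolated. -/
def G1 {VH : Type*} (H : SimpleGraph VH) (k : ℕ) : SimpleGraph (VH ⊕ Fin k) :=
  SimpleGraph.fromRel (fun a b => ∃ u v, a = Sum.inl u ∧ b = Sum.inl v ∧ H.Adj u v)

/-- The second snapshot: a `k`-clique on the `inr` vertices, the vertices of
`VH` being isolated. -/
def G2 (VH : Type*) (k : ℕ) : SimpleGraph (VH ⊕ Fin k) :=
  SimpleGraph.fromRel (fun a b => ∃ i j : Fin k, a = Sum.inr i ∧ b = Sum.inr j)

open Classical in
lemma edgeCnt_eq' {W : Type*} (G : SimpleGraph W) (S : Finset W) :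
    edgeCnt G S = (S.sym2.filter (· ∈ G.edgeSet)).card := by
  rw [edgeCnt, ← Set.ncard_coe_finset]
  congr 1
  ext e
  simp only [Set.mem_sep_iff, Finset.coe_filter, Set.mem_setOf_eq,
    Finset.mem_sym2_iff]
  tauto

lemma count_offdiag {W : Type*} [DecidableEq W] (R : Finset W) :
    (R.sym2.filter (fun e => ¬ e.IsDiag)).card = R.card.choose 2 := by
  rw [← Sym2.card_image_offDiag]
  congr 1
  ext e
  induction e with
  | _ a b =>
    simp only [Finset.mem_filter, Finset.mk_mem_sym2_iff, Sym2.mk_isDiag_iff,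
      Finset.mem_image, Finset.mem_offDiag, Prod.exists, Function.uncurry_apply_pair, Sym2.eq_iff]
    constructor
    · rintro ⟨⟨ha, hb⟩, hne⟩; exact ⟨a, b, ⟨ha, hb, hne⟩, Or.inl ⟨rfl, rfl⟩⟩
    · rintro ⟨x, y, ⟨hx, hy, hne⟩, (⟨rfl, rfl⟩ | ⟨rfl, rfl⟩)⟩
      · exact ⟨⟨hx, hy⟩, hne⟩
      · exact ⟨⟨hy, hx⟩, fun h => hne h.symm⟩

lemma two_mul_choose_two (n : ℕ) : 2 * n.choose 2 = n * (n - 1) := by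
  induction n with
  | zero => rfl
  | succ n ih =>
    rw [Nat.choose_succ_succ, Nat.mul_add, ih, Nat.choose_one_right]
    cases n with
    | zero => rfl
    | succ m => simp; ring

lemma G1_adj' {VH : Type*} (H : SimpleGraph VH) (k : ℕ) (a b : VH ⊕ Fin k) :
    (G1 H k).Adj a b ↔ ∃ u v, a = Sum.inl u ∧ b = Sum.inl v ∧ H.Adj u v := by
  rw [G1, SimpleGraph.fromRel_adj]
  constructor
  · rintro ⟨hne, (h | ⟨u, v, rfl, rfl, h⟩)⟩
    · exact h
    · exact ⟨v, u, rfl, rfl, h.symm⟩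
  · rintro ⟨u, v, rfl, rfl, h⟩
    exact ⟨by simp [H.ne_of_adj h], Or.inl ⟨u, v, rfl, rfl, h⟩⟩

lemma G2_adj' {VH : Type*} (k : ℕ) (a b : VH ⊕ Fin k) :
    (G2 VH k).Adj a b ↔ a ≠ b ∧ a.isRight ∧ b.isRight := by
  rw [G2, SimpleGraph.fromRel_adj]
  constructor
  · rintro ⟨hne, (⟨i, j, rfl, rfl⟩ | ⟨i, j, rfl, rfl⟩)⟩ <;> exact ⟨hne, rfl, rfl⟩
  · rintro ⟨hne, ha, hb⟩
    obtain ⟨i, rfl⟩ := Sum.isRight_iff.mp ha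
    obtain ⟨j, rfl⟩ := Sum.isRight_iff.mp hb
    exact ⟨hne, Or.inl ⟨i, j, rfl, rfl⟩⟩

open Classical in
lemma filter_G2_eq {VH : Type*} [DecidableEq VH] (k : ℕ) (S : Finset (VH ⊕ Fin k)) :
    S.sym2.filter (· ∈ (G2 VH k).edgeSet)
      = (S.filter (fun x => x.isRight)).sym2.filter (fun e => ¬ e.IsDiag) := by
  ext e
  induction e with
  | _ a b =>
    simp only [Finset.mem_filter, Finset.mk_mem_sym2_iff, SimpleGraph.mem_edgeSet,
      G2_adj', Sym2.mk_isDiag_iff]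
    tauto

open Classical in
lemma filter_G1_subset {VH : Type*} [DecidableEq VH] (H : SimpleGraph VH) (k : ℕ)
    (S : Finset (VH ⊕ Fin k)) :
    S.sym2.filter (· ∈ (G1 H k).edgeSet)
      ⊆ (S.filter (fun x => x.isLeft)).sym2.filter (fun e => ¬ e.IsDiag) := by
  intro e
  induction e with
  | _ a b =>
    simp only [Finset.mem_filter, Finset.mk_mem_sym2_iff, SimpleGraph.mem_edgeSet,
      G1_adj', Sym2.mk_isDiag_iff]
    rintro ⟨⟨ha, hb⟩, u, v, rfl, rfl, h⟩
    exact ⟨⟨⟨ha, rfl⟩, ⟨hb, rfl⟩⟩, by simp [H.ne_of_adj h]⟩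

open Classical in
lemma filter_G1_eq {VH : Type*} [DecidableEq VH] (H : SimpleGraph VH) (k : ℕ)
    (S : Finset (VH ⊕ Fin k))
    (hcl : ∀ u v, Sum.inl u ∈ S → Sum.inl v ∈ S → u ≠ v → H.Adj u v) :
    S.sym2.filter (· ∈ (G1 H k).edgeSet)
      = (S.filter (fun x => x.isLeft)).sym2.filter (fun e => ¬ e.IsDiag) := by
  refine Finset.Subset.antisymm (filter_G1_subset H k S) ?_
  intro e
  induction e with
  | _ a b =>
    simp only [Finset.mem_filter, Finset.mk_mem_sym2_iff, SimpleGraph.mem_edgeSet,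
      G1_adj', Sym2.mk_isDiag_iff]
    rintro ⟨⟨⟨ha, ha'⟩, ⟨hb, hb'⟩⟩, hne⟩
    obtain ⟨u, rfl⟩ := Sum.isLeft_iff.mp ha'
    obtain ⟨v, rfl⟩ := Sum.isLeft_iff.mp hb'
    exact ⟨⟨ha, hb⟩, u, v, rfl, rfl, hcl u v ha hb (fun h => hne (by rw [h]))⟩

theorem stmt18 {VH : Type*} [Fintype VH] [DecidableEq VH]
    (H : SimpleGraph VH) (k : ℕ) (hk : 2 ≤ k) :
    (∃ S : Finset (VH ⊕ Fin k),
        dens (G1 H k) S = dens (G2 VH k) S ∧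
        ((k : ℝ) - 1) / 2 ≤ dens (G1 H k) S + dens (G2 VH k) S) ↔
    (∃ C : Finset VH, H.IsNClique k C) := by
  classical
  have hk' : (2:ℝ) ≤ (k:ℝ) := by exact_mod_cast hk
  constructor
  · rintro ⟨S, hd, hsum⟩
    by_cases hn0 : S.card = 0
    · exfalso
      have h1 : dens (G1 H k) S = 0 := by simp [dens, hn0]
      have h2 : dens (G2 VH k) S = 0 := by simp [dens, hn0]
      rw [h1, h2] at hsum
      linarith
    have hcpos : (0:ℝ) < (S.card : ℝ) := by positivity
    set m1 := edgeCnt (G1 H k) S with hm1def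
    set m2 := edgeCnt (G2 VH k) S with hm2def
    -- m1 = m2
    have heq : m1 = m2 := by
      have h := hd
      simp only [dens, ← hm1def, ← hm2def] at h
      field_simp at h
      exact_mod_cast h
    -- the counting inequality in ℕ
    have hN : (k - 1) * S.card ≤ (m1 + m2) * 2 := by
      have h := hsum
      simp only [dens, ← hm1def, ← hm2def, ← add_div] at h
      rw [div_le_div_iff₀ (by norm_num) hcpos] at h
      have hcast : (((k - 1 : ℕ)) : ℝ) = (k:ℝ) - 1 := by
        rw [Nat.cast_sub (by omega)]; norm_num
      have : (((k-1) * S.card : ℕ) : ℝ) ≤ (((m1 + m2) * 2 : ℕ) : ℝ) := by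
        push_cast [hcast]
        push_cast at h
        linarith
      exact_mod_cast this
    set L := S.filter (fun x => x.isLeft) with hL
    set R := S.filter (fun x => x.isRight) with hR
    have hst : L.card + R.card = S.card := by
      have hRR : R = S.filter (fun x => ¬ (x.isLeft : Prop)) := by
        apply Finset.filter_congr
        intro x _; cases x <;> simp
      rw [hL, hRR, Finset.card_filter_add_card_filter_not]
    have hm2c : m2 = R.card.choose 2 := by
      rw [hm2def, edgeCnt_eq', filter_G2_eq, ← hR, count_offdiag]
    have hm1le : m1 ≤ L.card.choose 2 := by
      rw [hm1def, edgeCnt_eq', ← count_offdiag]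
      exact Finset.card_le_card (filter_G1_subset H k S)
    have htk : R.card ≤ k := by
      have hsub : R ⊆ Finset.univ.image (Sum.inr : Fin k → VH ⊕ Fin k) := by
        intro x hx
        rcases Finset.mem_filter.mp hx with ⟨-, hr⟩
        obtain ⟨i, rfl⟩ := Sum.isRight_iff.mp hr
        simp
      calc R.card ≤ _ := Finset.card_le_card hsub
        _ = k := by
          rw [Finset.card_image_of_injective _ Sum.inr_injective,
            Finset.card_univ, Fintype.card_fin]
    -- R.card ≥ 2
    have ht2 : 2 ≤ R.card := by
      by_contra h
      push_neg at h
      have hz : R.card.choose 2 = 0 := Nat.choose_eq_zero_of_lt h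
      have hzz : (m1 + m2) * 2 = 0 := by omega
      rw [hzz] at hN
      rcases Nat.mul_eq_zero.mp (Nat.le_zero.mp hN) with h' | h' <;> omega
    have hc2 : 2 * (R.card.choose 2) = R.card * (R.card - 1) := two_mul_choose_two _
    have hcl2 : 2 * (L.card.choose 2) = L.card * (L.card - 1) := two_mul_choose_two _
    set P := R.card * (R.card - 1) with hP
    set Q := L.card * (L.card - 1) with hQ
    -- L.card ≥ R.card
    have hts : R.card ≤ L.card := by
      by_contra h
      push_neg at h
      have h1 : P ≤ Q := by
        calc P = 2 * (R.card.choose 2) := hc2.symm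
          _ = 2 * m2 := by rw [hm2c]
          _ = 2 * m1 := by rw [heq]
          _ ≤ 2 * (L.card.choose 2) := by omega
          _ = Q := hcl2
      obtain ⟨t, ht⟩ : ∃ t, R.card = t + 2 := ⟨R.card - 2, by omega⟩
      have h2 : Q ≤ (t + 1) * t := by
        rw [hQ]
        exact Nat.mul_le_mul (by omega) (by omega)
      have h3 : (t + 1) * t < P := by
        rw [hP, ht]
        have he : t + 2 - 1 = t + 1 := rfl
        rw [he]
        nlinarith
      exact absurd ((h1.trans h2).trans_lt h3) (lt_irrefl P)
    -- R.card = k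
    have e1 : (m1 + m2) * 2 = 2 * P := by
      rw [heq, hm2c]; omega
    have hNN : (k - 1) * S.card ≤ 2 * P := e1 ▸ hN
    have hRk : R.card = k := by
      have h4 : (k - 1) * (2 * R.card) ≤ 2 * P :=
        le_trans (Nat.mul_le_mul_left _ (by omega)) hNN
      have h4' : (2 * R.card) * (k - 1) ≤ (2 * R.card) * (R.card - 1) := by
        calc (2 * R.card) * (k - 1) = (k - 1) * (2 * R.card) := by ring
          _ ≤ 2 * P := h4
          _ = (2 * R.card) * (R.card - 1) := by rw [hP]; ring
      have h5 : k - 1 ≤ R.card - 1 := Nat.le_of_mul_le_mul_left h4' (by omega)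
      omega
    -- L.card = k
    have hLk : L.card = k := by
      have h6 : (k - 1) * (L.card + k) ≤ (k - 1) * (2 * k) := by
        calc (k - 1) * (L.card + k) = (k - 1) * S.card := by rw [← hst, hRk]
          _ ≤ 2 * P := hNN
          _ = (k - 1) * (2 * k) := by rw [hP, hRk]; ring
      have h7 : L.card + k ≤ 2 * k := Nat.le_of_mul_le_mul_left (by
        calc (k-1) * (L.card + k) ≤ (k-1) * (2*k) := h6) (by omega)
      omega
    -- m1 achieves its max, so F1 equals the full off-diagonal on L
    have hm1eq : m1 = L.card.choose 2 := by
      rw [hLk]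
      rw [hRk] at hm2c
      omega
    have hF1 : S.sym2.filter (· ∈ (G1 H k).edgeSet)
        = L.sym2.filter (fun e => ¬ e.IsDiag) := by
      apply Finset.eq_of_subset_of_card_le (filter_G1_subset H k S)
      rw [count_offdiag, ← hm1eq, hm1def, edgeCnt_eq']
    refine ⟨Finset.univ.filter (fun u => Sum.inl u ∈ S), ?_, ?_⟩
    · intro u hu v hv huv
      simp only [Finset.coe_filter, Set.mem_setOf_eq, Finset.mem_univ, true_and] at hu hv
      have h1 : Sum.inl u ∈ L := Finset.mem_filter.mpr ⟨hu, rfl⟩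
      have h2 : Sum.inl v ∈ L := Finset.mem_filter.mpr ⟨hv, rfl⟩
      have hmem : s(Sum.inl u, Sum.inl v) ∈ L.sym2.filter (fun e => ¬ e.IsDiag) := by
        simp only [Finset.mem_filter, Finset.mk_mem_sym2_iff, Sym2.mk_isDiag_iff]
        exact ⟨⟨h1, h2⟩, by simp [huv]⟩
      rw [← hF1, Finset.mem_filter] at hmem
      have hadj := hmem.2
      rw [SimpleGraph.mem_edgeSet, G1_adj'] at hadj
      obtain ⟨u', v', hu', hv', hadj⟩ := hadj
      rw [Sum.inl.injEq] at hu' hv'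
      subst hu'; subst hv'
      exact hadj
    · have himg : L = (Finset.univ.filter (fun u => Sum.inl u ∈ S)).image Sum.inl := by
        ext x
        cases x <;> simp [hL]
      have := congrArg Finset.card himg
      rw [Finset.card_image_of_injective _ Sum.inl_injective, hLk] at this
      exact this.symm
  · rintro ⟨C, hC⟩
    set S := C.image Sum.inl ∪ Finset.univ.image (Sum.inr : Fin k → VH ⊕ Fin k) with hS
    have hcard : S.card = 2 * k := by
      rw [hS, Finset.card_union_of_disjoint, Finset.card_image_of_injective _ Sum.inl_injective,
        Finset.card_image_of_injective _ Sum.inr_injective, hC.2, Finset.card_univ,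
        Fintype.card_fin]
      · ring
      · simp [Finset.disjoint_left]
    have hLf : S.filter (fun x => x.isLeft) = C.image Sum.inl := by
      ext x; cases x <;> simp [hS]
    have hRf : S.filter (fun x => x.isRight)
        = Finset.univ.image (Sum.inr : Fin k → VH ⊕ Fin k) := by
      ext x; cases x <;> simp [hS]
    have hm2c : edgeCnt (G2 VH k) S = k.choose 2 := by
      rw [edgeCnt_eq', filter_G2_eq, hRf, count_offdiag,
        Finset.card_image_of_injective _ Sum.inr_injective, Finset.card_univ, Fintype.card_fin]
    have hcl : ∀ u v, Sum.inl u ∈ S → Sum.inl v ∈ S → u ≠ v → H.Adj u v := by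
      intro u v hu hv hne
      have hu' : u ∈ C := by simpa [hS] using hu
      have hv' : v ∈ C := by simpa [hS] using hv
      exact hC.1 (by simpa using hu') (by simpa using hv') hne
    have hm1c : edgeCnt (G1 H k) S = k.choose 2 := by
      rw [edgeCnt_eq', filter_G1_eq H k S hcl, hLf, count_offdiag,
        Finset.card_image_of_injective _ Sum.inl_injective, hC.2]
    have hch : (2:ℝ) * (k.choose 2 : ℝ) = (k:ℝ) * ((k:ℝ) - 1) := by
      have h2c := two_mul_choose_two k
      have : ((2 * k.choose 2 : ℕ) : ℝ) = ((k * (k - 1) : ℕ) : ℝ) := congrArg (Nat.cast : ℕ → ℝ) h2c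
      push_cast [Nat.cast_sub (show 1 ≤ k by omega)] at this
      linarith
    refine ⟨S, ?_, ?_⟩
    · simp only [dens, hm1c, hm2c]
    · simp only [dens, hm1c, hm2c, hcard, ← add_div]
      rw [div_le_div_iff₀ (by norm_num) (by positivity)]
      push_cast
      nlinarith
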